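/- arXiv:2003.13572 — 2 statements merged into one kernel-verified Lean document; each statement's English description precedes it below -/
import Mathlib

section
/- For every L > 0 and every δ ∈ (0, 2], there exists a constant C > 0 such that the following holds: for all real numbers a, b with a ≥ L and b ≥ L, every real number c with c ≤ 1 and 1 + c ≥ δ, and every real number d ≥ 0 satisfying cosh d = cosh a · cosh b − sinh a · sinh b · c, one has d < a + b − C. -/
/-- The analytic core of Lemma 3.2: in a hyperbolic triangle with two sides of
lengths `a, b ≥ L` meeting at angle `β` with `c = cos β` satisfying
`1 + c ≥ δ > 0`, the third side `d` (given by the hyperbolic law of cosines)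
is shorter than `a + b` by a definite constant `C = C(L, δ)`. -/
theorem hyperbolic_law_of_cosines_shortening
    (L : ℝ) (hL : 0 < L) (δ : ℝ) (hδ : δ ∈ Set.Ioc 0 2) :
    ∃ C : ℝ, 0 < C ∧
      ∀ a b c d : ℝ, L ≤ a → L ≤ b → c ≤ 1 → δ ≤ 1 + c → 0 ≤ d →
        Real.cosh d = Real.cosh a * Real.cosh b - Real.sinh a * Real.sinh b * c →
        d < a + b - C := by
  obtain ⟨hδ0, hδ2⟩ := hδ
  have hsL : 0 < Real.sinh L := Real.sinh_pos_iff.mpr hL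
  have hcL : 0 < Real.cosh L := Real.cosh_pos L
  set s : ℝ := δ * Real.sinh L / (2 * Real.cosh L) with hs_def
  have hs : 0 < s := div_pos (mul_pos hδ0 hsL) (by linarith)
  refine ⟨Real.arsinh s, Real.arsinh_pos_iff.mpr hs, ?_⟩
  set C := Real.arsinh s with hC_def
  have hC : 0 < C := Real.arsinh_pos_iff.mpr hs
  have hsC : Real.sinh C = s := Real.sinh_arsinh s
  have hcC : 1 < Real.cosh C := Real.one_lt_cosh.mpr (ne_of_gt hC)
  intro a b c d ha hb hc1 hcδ hd0 hd
  have hsa : 0 < Real.sinh a := Real.sinh_pos_iff.mpr (lt_of_lt_of_le hL ha)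
  have hsb : 0 < Real.sinh b := Real.sinh_pos_iff.mpr (lt_of_lt_of_le hL hb)
  -- C < a + b
  have hCab : C < a + b := by
    have h1 : s < Real.sinh L := by
      rw [hs_def, div_lt_iff₀ (by linarith)]
      nlinarith [Real.one_lt_cosh.mpr (ne_of_gt hL)]
    have h2 : Real.sinh L < Real.sinh (a + b) := by
      rw [Real.sinh_lt_sinh]
      linarith [lt_of_lt_of_le hL hb]
    have := Real.sinh_lt_sinh.mp (by rw [hsC]; linarith : Real.sinh C < Real.sinh (a + b))
    exact this
  -- key: sinh(x - L) ≥ 0 for x ≥ L gives cosh x * sinh L ≤ sinh x * cosh L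
  have key : ∀ x : ℝ, L ≤ x → Real.cosh x * Real.sinh L ≤ Real.sinh x * Real.cosh L := by
    intro x hx
    have h : 0 ≤ Real.sinh (x - L) := by
      rcases eq_or_lt_of_le hx with h' | h'
      · simp [← h']
      · exact (Real.sinh_pos_iff.mpr (sub_pos.mpr h')).le
    rw [Real.sinh_sub] at h
    linarith
  have ka := key a ha
  have kb := key b hb
  -- main inequality: cosh d < cosh (a + b - C)
  have hmain : Real.cosh d < Real.cosh (a + b - C) := by
    rw [Real.cosh_sub, Real.cosh_add, Real.sinh_add, hd, hsC, hs_def]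
    rw [div_eq_mul_inv, ← sub_pos]
    set I := (2 * Real.cosh L)⁻¹ with hI
    have hinv : 0 < I := inv_pos.mpr (by linarith)
    have hmul : (2 * Real.cosh L) * I = 1 := mul_inv_cancel₀ (by linarith)
    have h1 : (Real.sinh a * Real.cosh b + Real.cosh a * Real.sinh b) * Real.sinh L
        ≤ 2 * (Real.sinh a * Real.sinh b) * Real.cosh L := by
      nlinarith [mul_le_mul_of_nonneg_left kb hsa.le, mul_le_mul_of_nonneg_left ka hsb.le]
    have heq : 2 * (Real.sinh a * Real.sinh b) * Real.cosh L * (δ * I)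
        = Real.sinh a * Real.sinh b * δ := by
      have : Real.sinh a * Real.sinh b * δ * ((2 * Real.cosh L) * I)
          = Real.sinh a * Real.sinh b * δ := by rw [hmul, mul_one]
      linarith [this, (by ring : 2 * (Real.sinh a * Real.sinh b) * Real.cosh L * (δ * I)
        = Real.sinh a * Real.sinh b * δ * ((2 * Real.cosh L) * I))]
    have h2 : (Real.sinh a * Real.cosh b + Real.cosh a * Real.sinh b) * (δ * Real.sinh L * I)
        ≤ Real.sinh a * Real.sinh b * δ := by
      have h3 := mul_le_mul_of_nonneg_right h1 (mul_nonneg hδ0.le hinv.le)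
      nlinarith [h3]
    nlinarith [h2, mul_pos (mul_pos (Real.cosh_pos a) (Real.cosh_pos b)) (sub_pos.mpr hcC),
      mul_pos (mul_pos hsa hsb) (sub_pos.mpr hcC),
      mul_nonneg (mul_pos hsa hsb).le (by linarith : (0:ℝ) ≤ 1 + c - δ)]
  have := Real.cosh_lt_cosh.mp hmain
  rw [abs_of_nonneg hd0, abs_of_nonneg (by linarith : (0:ℝ) ≤ a + b - C)] at this
  exact this
end

section
/- Let Π be a group and let j, ρ : Π → SL(2, ℝ) be group homomorphisms. Suppose f : ℍ → ℍ is a 1-Lipschitz map that is (j, ρ)-equivariant, i.e. f(j(γ) · z) = ρ(γ) · f(z) for all γ ∈ Π and z ∈ ℍ. Then for every γ ∈ Π, inf_{z ∈ ℍ} dist(ρ(γ) · z, z) ≤ inf_{z ∈ ℍ} dist(j(γ) · z, z); that is, the ρ-translation length of every element is at most its j-translation length. -/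
open scoped UpperHalfPlane MatrixGroups

/-- If `f : ℍ → ℍ` is a 1-Lipschitz `(j, ρ)`-equivariant map between two
`SL(2, ℝ)`-representations of a group `Γ` (the surface group `Π` of the paper;
`Π` is a reserved token in Lean), then the `ρ`-translation length of every
element is at most its `j`-translation length (domination). -/
theorem domination_of_equivariant_one_lipschitz
    {Γ : Type*} [Group Γ] (j ρ : Γ →* SL(2, ℝ))
    (f : ℍ → ℍ) (hf : LipschitzWith 1 f)
    (heq : ∀ (γ : Γ) (z : ℍ), f (j γ • z) = ρ γ • f z) (γ : Γ) :
    (⨅ z : ℍ, dist (ρ γ • z) z) ≤ ⨅ z : ℍ, dist (j γ • z) z := by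
  refine le_ciInf fun z => ?_
  have h1 : dist (ρ γ • f z) (f z) ≤ dist (j γ • z) z := by
    rw [← heq]
    simpa using hf.dist_le_mul (j γ • z) z
  calc (⨅ w : ℍ, dist (ρ γ • w) w) ≤ dist (ρ γ • f z) (f z) :=
        ciInf_le ⟨0, fun x ⟨w, hw⟩ => hw ▸ dist_nonneg⟩ (f z)
    _ ≤ dist (j γ • z) z := h1
end
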